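/- For every p ∈ Σ(f), the vector σ(p) is orthogonal to the range of Df_p, i.e. ⟨σ(p), Df_p(u)⟩ = 0 for every u ∈ ℝ^n. -/

import Mathlib

noncomputable section

open scoped RealInnerProductSpace

/-- Index type for the domain `ℝⁿ`, `n = 2k+2+m`: coordinates `x` (2k of them),
`y`, `z`, and `s` (m of them). -/
abbrev DomIx (k m : ℕ) := (Fin (2*k)) ⊕ Unit ⊕ Unit ⊕ (Fin m)

/-- The domain `ℝⁿ` with its Euclidean inner product. -/
abbrev Dom (k m : ℕ) := EuclideanSpace ℝ (DomIx k m)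

/-- Index type for the codomain `ℝ^{n+k}`: coordinates `X` (2k+1), `Y` (k), `Z`, `S` (m). -/
abbrev CodIx (k m : ℕ) := (Fin (2*k+1)) ⊕ (Fin k) ⊕ Unit ⊕ (Fin m)

/-- The codomain `ℝ^{n+k}` with its Euclidean inner product. -/
abbrev Cod (k m : ℕ) := EuclideanSpace ℝ (CodIx k m)

/-- The `x`-coordinates of a point (0-based: `px p j` is `x_{j+1}`). -/
def px {k m : ℕ} (p : Dom k m) (j : Fin (2*k)) : ℝ := p (Sum.inl j)

/-- The `y`-coordinate of a point. -/
def py {k m : ℕ} (p : Dom k m) : ℝ := p (Sum.inr (Sum.inl ()))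

/-- The `z`-coordinate of a point. -/
def pz {k m : ℕ} (p : Dom k m) : ℝ := p (Sum.inr (Sum.inr (Sum.inl ())))

/-- The `s`-coordinates of a point. -/
def ps {k m : ℕ} (p : Dom k m) (j : Fin m) : ℝ := p (Sum.inr (Sum.inr (Sum.inr j)))

/-- The (0-based) index of the coordinate `x_{2i-1}` (1-based), for `i : Fin k` (0-based). -/
def xo {k : ℕ} (i : Fin k) : Fin (2*k) := ⟨2*i.1, by have := i.isLt; omega⟩

/-- The (0-based) index of the coordinate `x_{2i}` (1-based), for `i : Fin k` (0-based). -/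
def xe {k : ℕ} (i : Fin k) : Fin (2*k) := ⟨2*i.1+1, by have := i.isLt; omega⟩

/-- The cusp normal form `f : ℝⁿ → ℝ^{n+k}`:
`X_i = x_i`, `X_{2k+1} = y`, `Y_i = z x_{2i-1} + z² x_{2i}`, `Z = z y + z³`, `S_j = s_j`. -/
def cuspF (k m : ℕ) (p : Dom k m) : Cod k m :=
  (EuclideanSpace.equiv (CodIx k m) ℝ).symm fun q =>
    match q with
    | Sum.inl j => if h : j.1 < 2*k then px p ⟨j.1, h⟩ else py p
    | Sum.inr (Sum.inl i) => pz p * px p (xo i) + (pz p)^2 * px p (xe i)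
    | Sum.inr (Sum.inr (Sum.inl _)) => pz p * py p + (pz p)^3
    | Sum.inr (Sum.inr (Sum.inr j)) => ps p j

/-- The singular set `Σ(f)` of the cusp normal form:
`x_{2i-1} + 2 z x_{2i} = 0` for all `i` and `y + 3z² = 0`. -/
def SingSet (k m : ℕ) : Set (Dom k m) :=
  {p | (∀ i : Fin k, px p (xo i) + 2 * pz p * px p (xe i) = 0) ∧ py p + 3 * (pz p)^2 = 0}

/-- The standard basis vector `e_z` of the domain. -/
def ez (k m : ℕ) : Dom k m := EuclideanSpace.single (Sum.inr (Sum.inr (Sum.inl ()))) 1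


/-- The section `σ : ℝⁿ → ℝ^{n+k}` given coordinatewise (1-based, `1 ≤ i ≤ k`) by
`σ_{X_{2i−1}} = −2z x_{2i}/(1+z²+z⁴)`, `σ_{X_{2i}} = −2z² x_{2i}/(1+z²+z⁴)`,
`σ_{X_{2k+1}} = −6z²/(1+z²)`, `σ_{Y_i} = 2x_{2i}/(1+z²+z⁴)`, `σ_Z = 6z/(1+z²)`, `σ_{S_j} = 0`. -/
def sigmaF (k m : ℕ) (p : Dom k m) : Cod k m :=
  (EuclideanSpace.equiv (CodIx k m) ℝ).symm fun q =>
    match q with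
    | Sum.inl j =>
        if h : j.1 < 2*k then
          if h2 : j.1 % 2 = 0 then
            -- the coordinate `X_{2i-1}` (1-based) with `2i-1 = j.1+1`, so `x_{2i} = x`-coord `j.1+1`
            -2 * pz p * px p ⟨j.1+1, by omega⟩ / (1 + (pz p)^2 + (pz p)^4)
          else
            -- the coordinate `X_{2i}` (1-based) with `2i = j.1+1`, so `x_{2i} = x`-coord `j.1`
            -2 * (pz p)^2 * px p ⟨j.1, h⟩ / (1 + (pz p)^2 + (pz p)^4)
        else
          -- the coordinate `X_{2k+1}`
          -6 * (pz p)^2 / (1 + (pz p)^2)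
    | Sum.inr (Sum.inl i) => 2 * px p (xe i) / (1 + (pz p)^2 + (pz p)^4)
    | Sum.inr (Sum.inr (Sum.inl _)) => 6 * pz p / (1 + (pz p)^2)
    | Sum.inr (Sum.inr (Sum.inr _)) => 0

/-! ### Auxiliary material -/

def zix (k m : ℕ) : DomIx k m := Sum.inr (Sum.inr (Sum.inl ()))
def yix (k m : ℕ) : DomIx k m := Sum.inr (Sum.inl ())

/-- Projection onto a domain coordinate, as a continuous linear map. -/
def dprj (k m : ℕ) (q : DomIx k m) : Dom k m →L[ℝ] ℝ := EuclideanSpace.proj (𝕜 := ℝ) q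

lemma dprj_apply (k m : ℕ) (q : DomIx k m) (v : Dom k m) : dprj k m q v = v q := rfl

lemma hasFDerivAt_coord (k m : ℕ) (q : DomIx k m) (p : Dom k m) :
    HasFDerivAt (𝕜 := ℝ) (fun v : Dom k m => v q) (dprj k m q) p :=
  (dprj k m q).hasFDerivAt

/-- The coordinate functions of the explicit derivative of `cuspF` at `p`. -/
def dcoord (k m : ℕ) (p : Dom k m) (q : CodIx k m) : Dom k m →L[ℝ] ℝ :=
  match q with
  | Sum.inl j =>
      if h : j.1 < 2*k then dprj k m (Sum.inl ⟨j.1, h⟩) else dprj k m (yix k m)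
  | Sum.inr (Sum.inl i) =>
      pz p • dprj k m (Sum.inl (xo i)) + (pz p)^2 • dprj k m (Sum.inl (xe i))
        + (px p (xo i) + 2 * pz p * px p (xe i)) • dprj k m (zix k m)
  | Sum.inr (Sum.inr (Sum.inl _)) =>
      pz p • dprj k m (yix k m) + (py p + 3*(pz p)^2) • dprj k m (zix k m)
  | Sum.inr (Sum.inr (Sum.inr j)) => dprj k m (Sum.inr (Sum.inr (Sum.inr j)))

lemma cusp_hasFDerivAt (k m : ℕ) (p : Dom k m) :
    HasFDerivAt (cuspF k m)
      (((EuclideanSpace.equiv (CodIx k m) ℝ).symm : ((CodIx k m) → ℝ) →L[ℝ] Cod k m).comp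
        (ContinuousLinearMap.pi (dcoord k m p))) p := by
  rw [show cuspF k m = ((EuclideanSpace.equiv (CodIx k m) ℝ).symm : ((CodIx k m) → ℝ) → Cod k m)
      ∘ (fun p q =>
        (match q with
        | Sum.inl j => if h : j.1 < 2*k then px p ⟨j.1, h⟩ else py p
        | Sum.inr (Sum.inl i) => pz p * px p (xo i) + (pz p)^2 * px p (xe i)
        | Sum.inr (Sum.inr (Sum.inl _)) => pz p * py p + (pz p)^3
        | Sum.inr (Sum.inr (Sum.inr j)) => ps p j : ℝ)) from rfl]
  rw [ContinuousLinearEquiv.comp_hasFDerivAt_iff]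
  apply hasFDerivAt_pi''
  intro q
  rw [ContinuousLinearMap.proj_pi]
  have hz := hasFDerivAt_coord k m (zix k m) p
  have hy := hasFDerivAt_coord k m (yix k m) p
  match q with
  | Sum.inl j =>
      dsimp only [dcoord]
      split_ifs with h
      · exact hasFDerivAt_coord k m (Sum.inl ⟨j.1, h⟩) p
      · exact hy
  | Sum.inr (Sum.inl i) =>
      dsimp only [dcoord]
      have hxo := hasFDerivAt_coord k m (Sum.inl (xo i)) p
      have hxe := hasFDerivAt_coord k m (Sum.inl (xe i)) p
      have H := (hz.mul hxo).add ((hz.mul hz).mul hxe)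
      have hfun : (fun v : Dom k m => v (zix k m) * v (Sum.inl (xo i))
            + v (zix k m) * v (zix k m) * v (Sum.inl (xe i)))
          = fun v : Dom k m => pz v * px v (xo i) + (pz v)^2 * px v (xe i) := by
        funext v; simp only [pz, px, zix]; ring
      simp only [Pi.mul_def, Pi.add_def] at H
      rw [hfun] at H
      convert H using 1
      ext v
      simp only [ContinuousLinearMap.add_apply, ContinuousLinearMap.smul_apply, dprj_apply,
        smul_eq_mul, pz, px, py, zix, yix]
      ring
  | Sum.inr (Sum.inr (Sum.inl _)) =>
      dsimp only [dcoord]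
      have H := (hz.mul hy).add ((hz.mul hz).mul hz)
      have hfun : (fun v : Dom k m => v (zix k m) * v (yix k m)
            + v (zix k m) * v (zix k m) * v (zix k m))
          = fun v : Dom k m => pz v * py v + (pz v)^3 := by
        funext v; simp only [pz, py, zix, yix]; ring
      simp only [Pi.mul_def, Pi.add_def] at H
      rw [hfun] at H
      convert H using 1
      ext v
      simp only [ContinuousLinearMap.add_apply, ContinuousLinearMap.smul_apply, dprj_apply,
        smul_eq_mul, pz, px, py, zix, yix]
      ring
  | Sum.inr (Sum.inr (Sum.inr j)) =>
      exact hasFDerivAt_coord k m (Sum.inr (Sum.inr (Sum.inr j))) p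

lemma pair_sum_aux (k : ℕ) (g : ℕ → ℝ) :
    ∑ j ∈ Finset.range (2*k), g j = ∑ i ∈ Finset.range k, (g (2*i) + g (2*i+1)) := by
  induction k with
  | zero => simp
  | succ n ih =>
      rw [show 2*(n+1) = (2*n+1)+1 from by ring, Finset.sum_range_succ, Finset.sum_range_succ,
        Finset.sum_range_succ, ih]
      ring

lemma fin_sum_ext {n : ℕ} (G : Fin n → ℝ) :
    ∑ i : Fin n, G i = ∑ j ∈ Finset.range n, (if h : j < n then G ⟨j, h⟩ else 0) := by
  have e1 : ∑ i : Fin n, G i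
      = ∑ i : Fin n, (fun j : ℕ => if h : j < n then G ⟨j, h⟩ else 0) i.1 :=
    Finset.sum_congr rfl fun x _ => by simp [Fin.eta]
  rw [e1, Fin.sum_univ_eq_sum_range (fun j : ℕ => if h : j < n then G ⟨j, h⟩ else 0) n]

lemma sum_fin_split (k : ℕ) (F : Fin (2*k+1) → ℝ) :
    ∑ x : Fin (2*k+1), F x
      = (∑ i : Fin k, (F ⟨2*i.1, by omega⟩ + F ⟨2*i.1+1, by have := i.isLt; omega⟩))
        + F ⟨2*k, by omega⟩ := by
  rw [fin_sum_ext F, Finset.sum_range_succ, pair_sum_aux]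
  rw [dif_pos (by omega : 2*k < 2*k+1)]
  congr 1
  rw [fin_sum_ext (fun i : Fin k => F ⟨2*i.1, by omega⟩ + F ⟨2*i.1+1, by have := i.isLt; omega⟩)]
  refine Finset.sum_congr rfl fun i hi => ?_
  have hik : i < k := Finset.mem_range.mp hi
  rw [dif_pos (by omega : 2*i < 2*k+1), dif_pos (by omega : 2*i+1 < 2*k+1), dif_pos hik]

/-- for every `p ∈ Σ(f)`, the vector `σ(p)` is orthogonal to the range of `Df_p`. -/
theorem statement3 (k m : ℕ) (hk : 1 ≤ k) (p : Dom k m) (hp : p ∈ SingSet k m) :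
    ∀ u : Dom k m, ⟪sigmaF k m p, fderiv ℝ (cuspF k m) p u⟫ = 0 := by
  intro u
  rw [(cusp_hasFDerivAt k m p).fderiv]
  simp only [sigmaF, ContinuousLinearEquiv.coe_coe, ContinuousLinearMap.coe_comp',
    Function.comp_apply, ContinuousLinearMap.coe_pi']
  rw [PiLp.inner_apply]
  simp only [PiLp.continuousLinearEquiv_symm_apply, PiLp.toLp_apply,
    RCLike.inner_apply', conj_trivial]
  rw [Fintype.sum_sum_type, Fintype.sum_sum_type, Fintype.sum_sum_type]
  simp only [dcoord, ContinuousLinearMap.add_apply, ContinuousLinearMap.smul_apply,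
    dprj_apply, smul_eq_mul, Finset.univ_unique, Finset.sum_singleton, zero_mul,
    mul_zero, Finset.sum_const_zero, add_zero]
  rw [sum_fin_split]
  obtain ⟨hp1, hp2⟩ := hp
  rw [dif_neg (show ¬(2*k < 2*k) from by omega), dif_neg (show ¬(2*k < 2*k) from by omega)]
  rw [add_add_add_comm, ← Finset.sum_add_distrib]
  have htz : -6 * pz p ^ 2 / (1 + pz p ^ 2) * dprj k m (yix k m) u
      + 6 * pz p / (1 + pz p ^ 2) * (pz p * u (yix k m) + (py p + 3 * pz p ^ 2) * u (zix k m))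
        = 0 := by
    rw [hp2]
    rw [dprj_apply]
    field_simp
    ring
  rw [htz, add_zero]
  refine Finset.sum_eq_zero fun i _ => ?_
  have h1 : 2*(i:ℕ) < 2*k := by omega
  have h2 : 2*(i:ℕ)+1 < 2*k := by omega
  rw [dif_pos h1, dif_pos h1, dif_pos h2, dif_pos h2,
    dif_pos (show (2*(i:ℕ))%2 = 0 from by omega),
    dif_neg (show ¬((2*(i:ℕ)+1)%2 = 0) from by omega)]
  simp only [dprj_apply, xo, xe]
  have h0 := hp1 i
  simp only [xo, xe] at h0
  linear_combination (u (zix k m) * (2 * px p ⟨2*(i:ℕ)+1, h2⟩ / (1 + pz p ^ 2 + pz p ^ 4))) * h0
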